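/- Let x < y in the Bruhat order on S_n and let s be a simple reflection with sy < y, sx < x, and suppose x is not comparable to sy in the Bruhat order. Then the map z ↦ sz is an order-preserving bijection from the Bruhat interval [x, y] = {z : x ≤ z ≤ y} onto the Bruhat interval [sx, sy] = {z' : sx ≤ z' ≤ sy}. -/

import Mathlib

open Equiv

/-- The simple transposition σ_i = (i, i+1) in S_n (0-indexed). -/
def simpleT (n i : ℕ) (h : i + 1 < n) : Perm (Fin n) :=
  Equiv.swap ⟨i, Nat.lt_of_succ_lt h⟩ ⟨i + 1, h⟩

/-- Coxeter length = number of inversions. -/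
def len {n : ℕ} (w : Perm (Fin n)) : ℕ :=
  (Finset.univ.filter fun p : Fin n × Fin n => p.1 < p.2 ∧ w p.2 < w p.1).card

/-- Parabolic subgroup generated by the simple reflections with indices in J. -/
def SJ (n : ℕ) (J : Set ℕ) : Subgroup (Perm (Fin n)) :=
  Subgroup.closure {s | ∃ i, ∃ h : i + 1 < n, i ∈ J ∧ s = simpleT n i h}

/-- Minimal length left coset representatives: ℓ(ws) > ℓ(w) for all s ∈ J. -/
def DJ (n : ℕ) (J : Set ℕ) : Set (Perm (Fin n)) :=
  {w | ∀ i, ∀ h : i + 1 < n, i ∈ J → len w < len (w * simpleT n i h)}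

/-- Minimal double coset representatives: ℓ(s₁v) > ℓ(v), ℓ(vs₂) > ℓ(v). -/
def D2 (n : ℕ) (J1 J2 : Set ℕ) : Set (Perm (Fin n)) :=
  {v | (∀ i, ∀ h : i + 1 < n, i ∈ J1 → len v < len (simpleT n i h * v)) ∧
       (∀ i, ∀ h : i + 1 < n, i ∈ J2 → len v < len (v * simpleT n i h))}

/-- Bruhat order: reflexive transitive closure of multiplying by a transposition
while increasing the length. -/
def BruhatLE {n : ℕ} (x y : Perm (Fin n)) : Prop :=
  Relation.ReflTransGen
    (fun u v => (∃ a b : Fin n, a ≠ b ∧ v = Equiv.swap a b * u) ∧ len u < len v) x y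

def BruhatLT {n : ℕ} (x y : Perm (Fin n)) : Prop := BruhatLE x y ∧ x ≠ y

/-- w is the cycle (i₁−j+1, …, i₀+1, i₀): sends i to i−1 for i₀ < i ≤ i₁−j+1,
sends i₀ to i₁−j+1, and fixes all other points. -/
def IsCycleW (n i0 i1 j : ℕ) (w : Perm (Fin n)) : Prop :=
  ∀ i : Fin n,
    ((i0 < (i : ℕ) ∧ (i : ℕ) ≤ i1 - j + 1) → (w i : ℕ) = (i : ℕ) - 1) ∧
    ((i : ℕ) = i0 → (w i : ℕ) = i1 - j + 1) ∧
    (((i : ℕ) < i0 ∨ i1 - j + 1 < (i : ℕ)) → w i = i)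

theorem Equiv.Perm.apply_inv_self {α : Type*} (f : Perm α) (x : α) : f (f⁻¹ x) = x :=
  f.apply_symm_apply x

theorem Equiv.Perm.inv_apply_self {α : Type*} (f : Perm α) (x : α) : f⁻¹ (f x) = x :=
  f.symm_apply_apply x

namespace Stmt9Aux
variable {n : ℕ}

/-- rank count: number of positions `q < p` with value `≥ j`. -/
def Rk (w : Perm (Fin n)) (p j : ℕ) : ℕ :=
  (Finset.univ.filter fun q : Fin n => (q : ℕ) < p ∧ j ≤ (w q : ℕ)).card

/-- Ehresmann rank criterion. -/
def Crit (x y : Perm (Fin n)) : Prop := ∀ p j, Rk x p j ≤ Rk y p j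

lemma crit_refl (x : Perm (Fin n)) : Crit x x := fun _ _ => le_rfl

lemma crit_trans {x y z : Perm (Fin n)} (h1 : Crit x y) (h2 : Crit y z) : Crit x z :=
  fun p j => (h1 p j).trans (h2 p j)

lemma erase_card (S : Finset (Fin n)) (qa qb : Fin n) (hne : qa ≠ qb) :
    ((S.erase qa).erase qb).card +
      ((if qa ∈ S then 1 else 0) + (if qb ∈ S then 1 else 0)) = S.card := by
  have h1 : qb ∈ S.erase qa ↔ qb ∈ S := by
    simp [Finset.mem_erase, hne.symm]
  by_cases ha : qa ∈ S <;> by_cases hb : qb ∈ S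
  · have e1 : ((S.erase qa).erase qb).card + 1 = (S.erase qa).card :=
      Finset.card_erase_add_one (h1.mpr hb)
    have e2 : (S.erase qa).card + 1 = S.card := Finset.card_erase_add_one ha
    rw [if_pos ha, if_pos hb]; omega
  · have e2 : (S.erase qa).card + 1 = S.card := Finset.card_erase_add_one ha
    rw [Finset.erase_eq_of_notMem (fun hc => hb (h1.mp hc))]
    rw [if_pos ha, if_neg hb]; omega
  · have e1 : ((S.erase qa).erase qb).card + 1 = (S.erase qa).card :=
      Finset.card_erase_add_one (h1.mpr hb)
    rw [Finset.erase_eq_of_notMem ha] at e1 ⊢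
    rw [if_neg ha, if_pos hb]; omega
  · rw [Finset.erase_eq_of_notMem ha, Finset.erase_eq_of_notMem hb]
    rw [if_neg ha, if_neg hb]; omega

/-- Master equation for `Rk` of `swap a b * w`. -/
lemma Rk_swap (w : Perm (Fin n)) (a b : Fin n) (hab : a ≠ b) (p j : ℕ) :
    Rk (swap a b * w) p j +
      ((if ((w⁻¹ a : Fin n) : ℕ) < p ∧ j ≤ (a : ℕ) then 1 else 0) +
       (if ((w⁻¹ b : Fin n) : ℕ) < p ∧ j ≤ (b : ℕ) then 1 else 0))
    = Rk w p j +
      ((if ((w⁻¹ a : Fin n) : ℕ) < p ∧ j ≤ (b : ℕ) then 1 else 0) +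
       (if ((w⁻¹ b : Fin n) : ℕ) < p ∧ j ≤ (a : ℕ) then 1 else 0)) := by
  set qa := w⁻¹ a with hqa
  set qb := w⁻¹ b with hqb
  have hwa : w qa = a := w.apply_inv_self a
  have hwb : w qb = b := w.apply_inv_self b
  have hne : qa ≠ qb := fun hc => hab (by rw [← hwa, ← hwb, hc])
  set S := Finset.univ.filter fun q : Fin n => (q : ℕ) < p ∧ j ≤ (w q : ℕ) with hS
  set T := Finset.univ.filter fun q : Fin n => (q : ℕ) < p ∧ j ≤ ((swap a b * w) q : ℕ) with hT
  have hsame : (S.erase qa).erase qb = (T.erase qa).erase qb := by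
    ext q
    simp only [Finset.mem_erase, hS, hT, Finset.mem_filter, Finset.mem_univ, true_and]
    constructor
    · rintro ⟨h1, h2, h3, h4⟩
      refine ⟨h1, h2, h3, ?_⟩
      have : (swap a b * w) q = w q := by
        have hwq1 : w q ≠ a := fun hc => h2 (by rw [hqa, ← hc, w.inv_apply_self])
        have hwq2 : w q ≠ b := fun hc => h1 (by rw [hqb, ← hc, w.inv_apply_self])
        simp [Perm.mul_apply, swap_apply_of_ne_of_ne hwq1 hwq2]
      rwa [this]
    · rintro ⟨h1, h2, h3, h4⟩
      refine ⟨h1, h2, h3, ?_⟩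
      have : (swap a b * w) q = w q := by
        have hwq1 : w q ≠ a := fun hc => h2 (by rw [hqa, ← hc, w.inv_apply_self])
        have hwq2 : w q ≠ b := fun hc => h1 (by rw [hqb, ← hc, w.inv_apply_self])
        simp [Perm.mul_apply, swap_apply_of_ne_of_ne hwq1 hwq2]
      rwa [this] at h4
  have hSa : qa ∈ S ↔ ((qa : ℕ) < p ∧ j ≤ (a : ℕ)) := by
    simp [hS, hwa]
  have hSb : qb ∈ S ↔ ((qb : ℕ) < p ∧ j ≤ (b : ℕ)) := by
    simp [hS, hwb]
  have hTa : qa ∈ T ↔ ((qa : ℕ) < p ∧ j ≤ (b : ℕ)) := by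
    have h5 : (swap a b) (w qa) = b := by rw [hwa]; exact swap_apply_left a b
    rw [hT, Finset.mem_filter]; simp [Perm.mul_apply, h5]
  have hTb : qb ∈ T ↔ ((qb : ℕ) < p ∧ j ≤ (a : ℕ)) := by
    have h5 : (swap a b) (w qb) = a := by rw [hwb]; exact swap_apply_right a b
    rw [hT, Finset.mem_filter]; simp [Perm.mul_apply, h5]
  have e1 := erase_card S qa qb hne
  have e2 := erase_card T qa qb hne
  rw [hsame] at e1
  have eT : Rk (swap a b * w) p j = T.card := rfl
  have eS : Rk w p j = S.card := rfl
  rw [eT, eS]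
  by_cases c1 : (qa : ℕ) < p ∧ j ≤ (a : ℕ) <;>
  by_cases c2 : (qb : ℕ) < p ∧ j ≤ (b : ℕ) <;>
  by_cases c3 : (qa : ℕ) < p ∧ j ≤ (b : ℕ) <;>
  by_cases c4 : (qb : ℕ) < p ∧ j ≤ (a : ℕ) <;>
    simp only [hSa, hSb, hTa, hTb, c1, c2, c3, c4, if_pos, if_neg, not_false_iff] at e1 e2 ⊢ <;>
    omega

lemma lenP_mem {w : Perm (Fin n)} {pr : Fin n × Fin n} :
    pr ∈ (Finset.univ.filter fun p : Fin n × Fin n => p.1 < p.2 ∧ w p.2 < w p.1) ↔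
      ((pr.1 : ℕ) < (pr.2 : ℕ) ∧ (w pr.2 : ℕ) < (w pr.1 : ℕ)) := by
  simp only [Finset.mem_filter, Finset.mem_univ, true_and, Fin.lt_def]

lemma apply_ne_of_ne_inv {w : Perm (Fin n)} {p : Fin n} {a : Fin n} (h : p ≠ w⁻¹ a) :
    (w p : ℕ) ≠ (a : ℕ) :=
  fun hc => h (by rw [← Fin.val_injective hc, w.inv_apply_self])

/-- Key length lemma: multiplying by `swap a b` with `a < b` (values) and
`w⁻¹ a < w⁻¹ b` strictly increases length. -/
lemma len_lt_len_swap_mul {w : Perm (Fin n)} {a b : Fin n} (hab : (a : ℕ) < b)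
    (hpos : ((w⁻¹ a : Fin n) : ℕ) < ((w⁻¹ b : Fin n) : ℕ)) :
    len w < len (swap a b * w) := by
  set qa := w⁻¹ a with hqa
  set qb := w⁻¹ b with hqb
  set v := swap a b * w with hv
  have hwa : w qa = a := w.apply_inv_self a
  have hwb : w qb = b := w.apply_inv_self b
  have hvqa : (v qa : ℕ) = b := by
    show ((swap a b) (w qa) : ℕ) = b
    rw [hwa, swap_apply_left]
  have hvqb : (v qb : ℕ) = a := by
    show ((swap a b) (w qb) : ℕ) = a
    rw [hwb, swap_apply_right]
  have hvne : ∀ p : Fin n, p ≠ qa → p ≠ qb → (v p : ℕ) = (w p : ℕ) := by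
    intro p h1 h2
    show ((swap a b) (w p) : ℕ) = (w p : ℕ)
    rw [swap_apply_of_ne_of_ne
      (fun hc => apply_ne_of_ne_inv h1 (congrArg Fin.val hc))
      (fun hc => apply_ne_of_ne_inv h2 (congrArg Fin.val hc))]
  set Pw := Finset.univ.filter fun p : Fin n × Fin n => p.1 < p.2 ∧ w p.2 < w p.1 with hPw
  set Pv := Finset.univ.filter fun p : Fin n × Fin n => p.1 < p.2 ∧ v p.2 < v p.1 with hPv
  have memPw : ∀ pr : Fin n × Fin n,
      pr ∈ Pw ↔ ((pr.1 : ℕ) < pr.2 ∧ ((w pr.2 : Fin n) : ℕ) < ((w pr.1 : Fin n) : ℕ)) :=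
    fun pr => by rw [hPw]; exact lenP_mem
  have memPv : ∀ pr : Fin n × Fin n,
      pr ∈ Pv ↔ ((pr.1 : ℕ) < pr.2 ∧ ((v pr.2 : Fin n) : ℕ) < ((v pr.1 : Fin n) : ℕ)) :=
    fun pr => by rw [hPv]; exact lenP_mem
  have hqaqbPv : (qa, qb) ∈ Pv := by
    rw [memPv]
    exact ⟨hpos, by rw [hvqa, hvqb]; exact hab⟩
  have hqaqbPw : (qa, qb) ∉ Pw := by
    rw [memPw]
    rintro ⟨-, hc⟩
    rw [hwa, hwb] at hc
    omega
  have claim : ∀ pr : Fin n × Fin n, pr ∈ Pw → pr ∉ Pv →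
      ((swap qa qb pr.1, swap qa qb pr.2) ∈ Pv ∧
       (swap qa qb pr.1, swap qa qb pr.2) ∉ Pw ∧
       (swap qa qb pr.1, swap qa qb pr.2) ≠ (qa, qb)) := by
    rintro ⟨p1, p2⟩ hmem hnmem
    rw [memPw] at hmem
    obtain ⟨h12, hw12⟩ := hmem
    simp only at h12 hw12 ⊢
    have hv12 : ¬ ((v p2 : ℕ) < (v p1 : ℕ)) := by
      intro hc
      exact hnmem ((memPv _).mpr ⟨h12, hc⟩)
    rcases eq_or_ne p1 qa with rfl | hp1a
    · rcases eq_or_ne p2 qb with rfl | hp2b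
      · rw [hwa, hwb] at hw12; omega
      · have hp2a : p2 ≠ qa := fun hc => by subst hc; omega
        rw [hvqa, hvne p2 hp2a hp2b] at hv12
        rw [hwa] at hw12
        have hb2 := apply_ne_of_ne_inv hp2b
        omega
    · rcases eq_or_ne p1 qb with rfl | hp1b
      · -- p1 = qb, so a < w p2 < b ; image (qa, p2)
        have hp2a : p2 ≠ qa := fun hc => by subst hc; omega
        have hp2b : p2 ≠ qb := fun hc => by subst hc; omega
        rw [hvqb, hvne p2 hp2a hp2b] at hv12
        rw [hwb] at hw12
        have ha2 := apply_ne_of_ne_inv hp2a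
        rw [swap_apply_right, swap_apply_of_ne_of_ne hp2a hp2b]
        refine ⟨(memPv _).mpr ⟨?_, ?_⟩, ?_, ?_⟩
        · simp only; omega
        · simp only
          rw [hvne p2 hp2a hp2b, hvqa]
          omega
        · rw [memPw]
          rintro ⟨-, hc⟩
          simp only at hc
          rw [hwa] at hc
          omega
        · intro hc
          exact hp2b (congrArg Prod.snd hc)
      · have hvp1 := hvne p1 hp1a hp1b
        rcases eq_or_ne p2 qa with rfl | hp2a
        · -- p2 = qa, p1 < qa, a < w p1 < b ; image (p1, qb)
          rw [hvp1, hvqa] at hv12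
          rw [hwa] at hw12
          have hb1 := apply_ne_of_ne_inv hp1b
          rw [swap_apply_of_ne_of_ne hp1a hp1b, swap_apply_left]
          refine ⟨(memPv _).mpr ⟨?_, ?_⟩, ?_, ?_⟩
          · simp only; omega
          · simp only
            rw [hvqb, hvp1]
            omega
          · rw [memPw]
            rintro ⟨-, hc⟩
            simp only at hc
            rw [hwb] at hc
            omega
          · intro hc
            exact hp1a (congrArg Prod.fst hc)
        · rcases eq_or_ne p2 qb with rfl | hp2b
          · rw [hvp1, hvqb] at hv12
            rw [hwb] at hw12
            have ha1 := apply_ne_of_ne_inv hp1a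
            omega
          · rw [hvp1, hvne p2 hp2a hp2b] at hv12
            omega
  have hmapsto : ∀ pr ∈ Pw,
      (if pr ∈ Pv then pr else (swap qa qb pr.1, swap qa qb pr.2)) ∈ Pv.erase (qa, qb) := by
    intro pr hpr
    by_cases hin : pr ∈ Pv
    · rw [if_pos hin]
      refine Finset.mem_erase.mpr ⟨?_, hin⟩
      intro hc; rw [hc] at hpr; exact hqaqbPw hpr
    · rw [if_neg hin]
      obtain ⟨c1, _, c3⟩ := claim pr hpr hin
      exact Finset.mem_erase.mpr ⟨c3, c1⟩
  have hinj : Set.InjOn (fun pr : Fin n × Fin n =>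
      (if pr ∈ Pv then pr else (swap qa qb pr.1, swap qa qb pr.2))) Pw := by
    intro pr1 h1 pr2 h2 heq
    simp only at heq
    by_cases i1 : pr1 ∈ Pv <;> by_cases i2 : pr2 ∈ Pv
    · rwa [if_pos i1, if_pos i2] at heq
    · rw [if_pos i1, if_neg i2] at heq
      obtain ⟨-, c2, -⟩ := claim pr2 h2 i2
      rw [heq] at h1
      exact absurd h1 c2
    · rw [if_neg i1, if_pos i2] at heq
      obtain ⟨-, c2, -⟩ := claim pr1 h1 i1
      rw [← heq] at h2
      exact absurd h2 c2
    · rw [if_neg i1, if_neg i2] at heq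
      have f1 := (swap qa qb).injective (congrArg Prod.fst heq)
      have f2 := (swap qa qb).injective (congrArg Prod.snd heq)
      exact Prod.ext f1 f2
  have hcard : Pw.card ≤ (Pv.erase (qa, qb)).card :=
    Finset.card_le_card_of_injOn _ hmapsto hinj
  have hc2 : (Pv.erase (qa, qb)).card + 1 = Pv.card := Finset.card_erase_add_one hqaqbPv
  show Pw.card < Pv.card
  omega

/-- Adjacent swap in increasing position order: length goes up by exactly 1. -/
lemma len_swap_adj_of_lt {w : Perm (Fin n)} {a b : Fin n} (hb : (b : ℕ) = (a : ℕ) + 1)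
    (hpos : ((w⁻¹ a : Fin n) : ℕ) < ((w⁻¹ b : Fin n) : ℕ)) :
    len (swap a b * w) = len w + 1 := by
  set qa := w⁻¹ a with hqa
  set qb := w⁻¹ b with hqb
  set v := swap a b * w with hv
  have hwa : w qa = a := w.apply_inv_self a
  have hwb : w qb = b := w.apply_inv_self b
  have hvqa : (v qa : ℕ) = b := by
    show ((swap a b) (w qa) : ℕ) = b
    rw [hwa, swap_apply_left]
  have hvqb : (v qb : ℕ) = a := by
    show ((swap a b) (w qb) : ℕ) = a
    rw [hwb, swap_apply_right]
  have hvne : ∀ p : Fin n, p ≠ qa → p ≠ qb → (v p : ℕ) = (w p : ℕ) := by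
    intro p h1 h2
    show ((swap a b) (w p) : ℕ) = (w p : ℕ)
    rw [swap_apply_of_ne_of_ne
      (fun hc => apply_ne_of_ne_inv h1 (congrArg Fin.val hc))
      (fun hc => apply_ne_of_ne_inv h2 (congrArg Fin.val hc))]
  set Pw := Finset.univ.filter fun p : Fin n × Fin n => p.1 < p.2 ∧ w p.2 < w p.1 with hPw
  set Pv := Finset.univ.filter fun p : Fin n × Fin n => p.1 < p.2 ∧ v p.2 < v p.1 with hPv
  have memPw : ∀ pr : Fin n × Fin n,
      pr ∈ Pw ↔ ((pr.1 : ℕ) < pr.2 ∧ ((w pr.2 : Fin n) : ℕ) < ((w pr.1 : Fin n) : ℕ)) :=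
    fun pr => by rw [hPw]; exact lenP_mem
  have memPv : ∀ pr : Fin n × Fin n,
      pr ∈ Pv ↔ ((pr.1 : ℕ) < pr.2 ∧ ((v pr.2 : Fin n) : ℕ) < ((v pr.1 : Fin n) : ℕ)) :=
    fun pr => by rw [hPv]; exact lenP_mem
  have hqaqbPv : (qa, qb) ∈ Pv := by
    rw [memPv]
    exact ⟨hpos, by rw [hvqa, hvqb]; omega⟩
  have hqaqbPw : (qa, qb) ∉ Pw := by
    rw [memPw]
    rintro ⟨-, hc⟩
    rw [hwa, hwb] at hc
    omega
  have hiff : ∀ pr : Fin n × Fin n, pr ≠ (qa, qb) → (pr ∈ Pv ↔ pr ∈ Pw) := by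
    rintro ⟨p1, p2⟩ hne
    rw [memPv, memPw]
    simp only
    refine and_congr_right fun h12 => ?_
    rcases eq_or_ne p1 qa with rfl | hp1a
    · rcases eq_or_ne p2 qb with rfl | hp2b
      · exact absurd rfl hne
      · have hp2a : p2 ≠ qa := fun hc => by subst hc; omega
        have h2a := apply_ne_of_ne_inv hp2a
        have h2b := apply_ne_of_ne_inv hp2b
        rw [hvqa, hvne p2 hp2a hp2b, hwa]
        omega
    · rcases eq_or_ne p1 qb with rfl | hp1b
      · rcases eq_or_ne p2 qa with rfl | hp2a
        · omega
        · have hp2b : p2 ≠ qb := fun hc => by subst hc; omega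
          have h2a := apply_ne_of_ne_inv hp2a
          have h2b := apply_ne_of_ne_inv hp2b
          rw [hvqb, hvne p2 hp2a hp2b, hwb]
          omega
      · have h1a := apply_ne_of_ne_inv hp1a
        have h1b := apply_ne_of_ne_inv hp1b
        have hvp1 := hvne p1 hp1a hp1b
        rcases eq_or_ne p2 qa with rfl | hp2a
        · rw [hvqa, hvp1, hwa]; omega
        · rcases eq_or_ne p2 qb with rfl | hp2b
          · rw [hvqb, hvp1, hwb]; omega
          · rw [hvp1, hvne p2 hp2a hp2b]
  have hset : Pv = insert (qa, qb) Pw := by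
    ext pr
    rw [Finset.mem_insert]
    by_cases hpr : pr = (qa, qb)
    · subst hpr
      simp [hqaqbPv]
    · rw [hiff pr hpr]
      simp [hpr]
  show Pv.card = Pw.card + 1
  rw [hset, Finset.card_insert_of_notMem hqaqbPw]

lemma swap_mul_cancel (a b : Fin n) (w : Perm (Fin n)) :
    swap a b * (swap a b * w) = w := by
  rw [← mul_assoc, swap_mul_self, one_mul]

lemma inv_swap_mul_apply_left (w : Perm (Fin n)) (a b : Fin n) :
    (swap a b * w)⁻¹ a = w⁻¹ b := by
  rw [mul_inv_rev, swap_inv, Perm.mul_apply, swap_apply_left]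

lemma inv_swap_mul_apply_right (w : Perm (Fin n)) (a b : Fin n) :
    (swap a b * w)⁻¹ b = w⁻¹ a := by
  rw [mul_inv_rev, swap_inv, Perm.mul_apply, swap_apply_right]

lemma inv_pos_ne {w : Perm (Fin n)} {a b : Fin n} (hab : a ≠ b) :
    ((w⁻¹ a : Fin n) : ℕ) ≠ ((w⁻¹ b : Fin n) : ℕ) :=
  fun hc => hab (by rw [← w.apply_inv_self a, ← w.apply_inv_self b, Fin.val_injective hc])

/-- Dichotomy for adjacent swaps. -/
lemma adj_cases {w : Perm (Fin n)} {a b : Fin n} (hb : (b : ℕ) = (a : ℕ) + 1) :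
    (((w⁻¹ a : Fin n) : ℕ) < ((w⁻¹ b : Fin n) : ℕ) ∧ len (swap a b * w) = len w + 1) ∨
    (((w⁻¹ b : Fin n) : ℕ) < ((w⁻¹ a : Fin n) : ℕ) ∧ len w = len (swap a b * w) + 1) := by
  have hab : a ≠ b := fun hc => by rw [hc] at hb; omega
  have hne := inv_pos_ne (w := w) hab
  rcases lt_or_gt_of_ne hne with hlt | hgt
  · exact Or.inl ⟨hlt, len_swap_adj_of_lt hb hlt⟩
  · right
    refine ⟨hgt, ?_⟩
    have h1 : (((swap a b * w)⁻¹ a : Fin n) : ℕ) < (((swap a b * w)⁻¹ b : Fin n) : ℕ) := by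
      rw [inv_swap_mul_apply_left, inv_swap_mul_apply_right]
      exact hgt
    have := len_swap_adj_of_lt (w := swap a b * w) hb h1
    rwa [swap_mul_cancel] at this

/-- descent characterization for adjacent swaps. -/
lemma descent_iff {w : Perm (Fin n)} {a b : Fin n} (hb : (b : ℕ) = (a : ℕ) + 1) :
    len (swap a b * w) < len w ↔ ((w⁻¹ b : Fin n) : ℕ) < ((w⁻¹ a : Fin n) : ℕ) := by
  rcases adj_cases (w := w) hb with ⟨h1, h2⟩ | ⟨h1, h2⟩
  · constructor
    · intro hc; omega
    · intro hc; omega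
  · constructor
    · intro _; exact h1
    · intro _; omega

/-- One Bruhat step implies the rank criterion. -/
lemma crit_of_step {u v : Perm (Fin n)}
    (hst : (∃ a b : Fin n, a ≠ b ∧ v = swap a b * u) ∧ len u < len v) : Crit u v := by
  obtain ⟨⟨a, b, hab, rfl⟩, hlen⟩ := hst
  -- wlog a < b as values
  have key : ∀ a b : Fin n, (a : ℕ) < (b : ℕ) → len u < len (swap a b * u) →
      Crit u (swap a b * u) := by
    intro a b hvab hlen
    have hne := inv_pos_ne (w := u) (fun hc : a = b => by rw [hc] at hvab; omega)
    rcases lt_or_gt_of_ne hne with hq | hq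
    · intro p j
      have heq := Rk_swap u a b (fun hc => by rw [hc] at hvab; omega) p j
      split_ifs at heq <;> omega
    · exfalso
      have h1 : (((swap a b * u)⁻¹ a : Fin n) : ℕ) < (((swap a b * u)⁻¹ b : Fin n) : ℕ) := by
        rw [inv_swap_mul_apply_left, inv_swap_mul_apply_right]
        exact hq
      have := len_lt_len_swap_mul hvab h1
      rw [swap_mul_cancel] at this
      omega
  have habv : (a : ℕ) ≠ (b : ℕ) := fun hc => hab (Fin.val_injective hc)
  rcases lt_or_gt_of_ne habv with hvab | hvab
  · exact key a b hvab hlen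
  · rw [swap_comm] at hlen ⊢
    exact key b a hvab hlen

lemma crit_of_bruhat {x y : Perm (Fin n)} (h : BruhatLE x y) : Crit x y := by
  induction h with
  | refl => exact crit_refl x
  | tail _ hstep ih => exact crit_trans ih (crit_of_step hstep)

/-- counting in steps over the threshold. -/
lemma Rk_succ (w : Perm (Fin n)) (p : Fin n) (j : ℕ) :
    Rk w ((p : ℕ) + 1) j = Rk w (p : ℕ) j + if j ≤ (w p : ℕ) then 1 else 0 := by
  by_cases hj : j ≤ (w p : ℕ)
  · rw [if_pos hj]
    have hset : (Finset.univ.filter fun q : Fin n => (q : ℕ) < (p : ℕ) + 1 ∧ j ≤ (w q : ℕ))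
        = insert p (Finset.univ.filter fun q : Fin n => (q : ℕ) < (p : ℕ) ∧ j ≤ (w q : ℕ)) := by
      ext q
      simp only [Finset.mem_insert, Finset.mem_filter, Finset.mem_univ, true_and]
      constructor
      · rintro ⟨h1, h2⟩
        rcases eq_or_ne q p with rfl | hqp
        · exact Or.inl rfl
        · have : (q : ℕ) ≠ (p : ℕ) := fun hc => hqp (Fin.val_injective hc)
          exact Or.inr ⟨by omega, h2⟩
      · rintro (rfl | ⟨h1, h2⟩)
        · exact ⟨by omega, hj⟩
        · exact ⟨by omega, h2⟩
    show (Finset.univ.filter fun q : Fin n => (q : ℕ) < (p : ℕ) + 1 ∧ j ≤ (w q : ℕ)).card = _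
    rw [hset, Finset.card_insert_of_notMem (by
      simp only [Finset.mem_filter, Finset.mem_univ, true_and]
      rintro ⟨hc, -⟩
      omega)]
    rfl
  · rw [if_neg hj, add_zero]
    show (Finset.univ.filter fun q : Fin n => (q : ℕ) < (p : ℕ) + 1 ∧ j ≤ (w q : ℕ)).card = _
    congr 1
    ext q
    simp only [Finset.mem_filter, Finset.mem_univ, true_and]
    constructor
    · rintro ⟨h1, h2⟩
      rcases eq_or_ne q p with rfl | hqp
      · exact absurd h2 hj
      · have : (q : ℕ) ≠ (p : ℕ) := fun hc => hqp (Fin.val_injective hc)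
        exact ⟨by omega, h2⟩
    · rintro ⟨h1, h2⟩
      exact ⟨by omega, h2⟩

/-- step in the value threshold. -/
lemma Rk_step (w : Perm (Fin n)) (p : ℕ) (jF : Fin n) :
    Rk w p (jF : ℕ) = Rk w p ((jF : ℕ) + 1) +
      if ((w⁻¹ jF : Fin n) : ℕ) < p then 1 else 0 := by
  set qj := w⁻¹ jF with hqj
  have hwq : w qj = jF := w.apply_inv_self jF
  by_cases hq : (qj : ℕ) < p
  · rw [if_pos hq]
    have hset : (Finset.univ.filter fun q : Fin n => (q : ℕ) < p ∧ (jF : ℕ) ≤ (w q : ℕ))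
        = insert qj (Finset.univ.filter fun q : Fin n => (q : ℕ) < p ∧ (jF : ℕ) + 1 ≤ (w q : ℕ)) := by
      ext q
      simp only [Finset.mem_insert, Finset.mem_filter, Finset.mem_univ, true_and]
      constructor
      · rintro ⟨h1, h2⟩
        rcases eq_or_ne q qj with rfl | hqq
        · exact Or.inl rfl
        · have := apply_ne_of_ne_inv (a := jF) (by rw [← hqj] at *; exact hqq)
          exact Or.inr ⟨h1, by omega⟩
      · rintro (rfl | ⟨h1, h2⟩)
        · exact ⟨hq, by rw [hwq]⟩
        · exact ⟨h1, by omega⟩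
    show (Finset.univ.filter fun q : Fin n => (q : ℕ) < p ∧ (jF : ℕ) ≤ (w q : ℕ)).card = _
    rw [hset, Finset.card_insert_of_notMem (by
      simp only [Finset.mem_filter, Finset.mem_univ, true_and]
      rintro ⟨-, hc⟩
      rw [hwq] at hc
      omega)]
    rfl
  · rw [if_neg hq, add_zero]
    show (Finset.univ.filter fun q : Fin n => (q : ℕ) < p ∧ (jF : ℕ) ≤ (w q : ℕ)).card = _
    congr 1
    ext q
    simp only [Finset.mem_filter, Finset.mem_univ, true_and]
    constructor
    · rintro ⟨h1, h2⟩
      rcases eq_or_ne q qj with rfl | hqq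
      · exact absurd h1 hq
      · have := apply_ne_of_ne_inv (a := jF) (by rw [← hqj] at *; exact hqq)
        exact ⟨h1, by omega⟩
    · rintro ⟨h1, h2⟩
      exact ⟨h1, by omega⟩

/-- splitting the position range. -/
lemma Rk_split (w : Perm (Fin n)) (m p j : ℕ) (hmp : m ≤ p) :
    Rk w p j = Rk w m j +
      (Finset.univ.filter fun q : Fin n => m ≤ (q : ℕ) ∧ (q : ℕ) < p ∧ j ≤ (w q : ℕ)).card := by
  have hset : (Finset.univ.filter fun q : Fin n => (q : ℕ) < p ∧ j ≤ (w q : ℕ))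
      = (Finset.univ.filter fun q : Fin n => (q : ℕ) < m ∧ j ≤ (w q : ℕ)) ∪
        (Finset.univ.filter fun q : Fin n => m ≤ (q : ℕ) ∧ (q : ℕ) < p ∧ j ≤ (w q : ℕ)) := by
    ext q
    simp only [Finset.mem_union, Finset.mem_filter, Finset.mem_univ, true_and]
    constructor
    · rintro ⟨h1, h2⟩
      by_cases hm : (q : ℕ) < m
      · exact Or.inl ⟨hm, h2⟩
      · exact Or.inr ⟨by omega, h1, h2⟩
    · rintro (⟨h1, h2⟩ | ⟨h1, h2, h3⟩)
      · exact ⟨by omega, h2⟩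
      · exact ⟨h2, h3⟩
  have hdisj : Disjoint
      (Finset.univ.filter fun q : Fin n => (q : ℕ) < m ∧ j ≤ (w q : ℕ))
      (Finset.univ.filter fun q : Fin n => m ≤ (q : ℕ) ∧ (q : ℕ) < p ∧ j ≤ (w q : ℕ)) := by
    rw [Finset.disjoint_left]
    intro q hq1 hq2
    simp only [Finset.mem_filter, Finset.mem_univ, true_and] at hq1 hq2
    omega
  show (Finset.univ.filter fun q : Fin n => (q : ℕ) < p ∧ j ≤ (w q : ℕ)).card = _
  rw [hset, Finset.card_union_of_disjoint hdisj]
  rfl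

/-- The descending construction: from `Crit x y`, `x ≠ y`, find a Bruhat-lower `y'`. -/
lemma descend {x y : Perm (Fin n)} (hcrit : Crit x y) (hne : x ≠ y) :
    ∃ y' : Perm (Fin n), len y' < len y ∧ Crit x y' ∧
      (∃ a b : Fin n, a ≠ b ∧ y = swap a b * y') := by
  classical
  -- first difference position
  set D := Finset.univ.filter (fun q : Fin n => x q ≠ y q) with hD
  have hDne : D.Nonempty := by
    by_contra hc
    rw [Finset.not_nonempty_iff_eq_empty] at hc
    apply hne
    ext q
    by_contra hq
    have : q ∈ D := by simp [hD, Fin.val_injective.ne_iff]; exact fun hc2 => hq (congrArg Fin.val hc2)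
    rw [hc] at this
    exact absurd this (Finset.notMem_empty q)
  set iF := D.min' hDne with hiF
  have hiFD : iF ∈ D := D.min'_mem hDne
  have hxineyi : x iF ≠ y iF := by
    have := hiFD
    rw [hD, Finset.mem_filter] at this
    exact this.2
  have hpre : ∀ q : Fin n, (q : ℕ) < (iF : ℕ) → x q = y q := by
    intro q hq
    by_contra hc
    have hqD : q ∈ D := by rw [hD, Finset.mem_filter]; exact ⟨Finset.mem_univ q, hc⟩
    have := D.min'_le q hqD
    rw [← hiF] at this
    rw [Fin.le_def] at this
    omega
  have hRkpre : ∀ j, Rk x (iF : ℕ) j = Rk y (iF : ℕ) j := by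
    intro j
    show (Finset.univ.filter fun q : Fin n => (q : ℕ) < (iF : ℕ) ∧ j ≤ (x q : ℕ)).card = _
    congr 1
    ext q
    simp only [Finset.mem_filter, Finset.mem_univ, true_and]
    constructor
    · rintro ⟨h1, h2⟩
      exact ⟨h1, by rw [← hpre q h1]; exact h2⟩
    · rintro ⟨h1, h2⟩
      exact ⟨h1, by rw [hpre q h1]; exact h2⟩
  -- x iF < y iF
  have hxiyi : (x iF : ℕ) < (y iF : ℕ) := by
    have h1 := hcrit ((iF : ℕ) + 1) (x iF : ℕ)
    rw [Rk_succ, Rk_succ, hRkpre] at h1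
    have hne2 : (x iF : ℕ) ≠ (y iF : ℕ) := fun hc => hxineyi (Fin.val_injective hc)
    split_ifs at h1 <;> omega
  -- the set for q2
  set D2s := Finset.univ.filter
    (fun q : Fin n => (iF : ℕ) < (q : ℕ) ∧ (x iF : ℕ) ≤ (y q : ℕ) ∧ (y q : ℕ) < (y iF : ℕ))
    with hD2
  have hD2ne : D2s.Nonempty := by
    refine ⟨y⁻¹ (x iF), ?_⟩
    rw [hD2, Finset.mem_filter]
    have hyq : y (y⁻¹ (x iF)) = x iF := y.apply_inv_self (x iF)
    refine ⟨Finset.mem_univ _, ?_, ?_, ?_⟩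
    · -- iF < y⁻¹ (x iF)
      have hne1 : y⁻¹ (x iF) ≠ iF := by
        intro hc
        rw [hc] at hyq
        exact hxineyi hyq.symm
      have hne1' : ((y⁻¹ (x iF) : Fin n) : ℕ) ≠ (iF : ℕ) :=
        fun hc => hne1 (Fin.val_injective hc)
      by_contra hc
      push_neg at hc
      have hlt : ((y⁻¹ (x iF) : Fin n) : ℕ) < (iF : ℕ) := by omega
      have := hpre _ hlt
      rw [hyq] at this
      have : y⁻¹ (x iF) = iF := x.injective (by rw [this])
      exact hne1 this
    · rw [hyq]
    · rw [hyq]; exact hxiyi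
  set q2F := D2s.min' hD2ne with hq2F
  have hq2D : q2F ∈ D2s := D2s.min'_mem hD2ne
  rw [hD2, Finset.mem_filter] at hq2D
  obtain ⟨-, hiq2, hxia, hayb⟩ := hq2D
  have hmin2 : ∀ q : Fin n, (iF : ℕ) < (q : ℕ) → (q : ℕ) < (q2F : ℕ) →
      ¬((x iF : ℕ) ≤ (y q : ℕ) ∧ (y q : ℕ) < (y iF : ℕ)) := by
    intro q h1 h2 hc
    have hqD : q ∈ D2s := by
      rw [hD2, Finset.mem_filter]
      exact ⟨Finset.mem_univ q, h1, hc.1, hc.2⟩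
    have := D2s.min'_le q hqD
    rw [← hq2F, Fin.le_def] at this
    omega
  -- define a b and y'
  set a := y q2F with ha
  set b := y iF with hbdef
  have hvab : (a : ℕ) < (b : ℕ) := hayb
  have hab : a ≠ b := fun hc => by rw [hc] at hvab; omega
  refine ⟨swap a b * y, ?_, ?_, a, b, hab, (swap_mul_cancel a b y).symm⟩
  · -- length decreases
    have h1 : (((swap a b * y)⁻¹ a : Fin n) : ℕ) < (((swap a b * y)⁻¹ b : Fin n) : ℕ) := by
      rw [inv_swap_mul_apply_left, inv_swap_mul_apply_right]
      have e1 : y⁻¹ b = iF := y.injective (by rw [y.apply_inv_self])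
      have e2 : y⁻¹ a = q2F := y.injective (by rw [y.apply_inv_self])
      rw [e1, e2]
      exact hiq2
    have := len_lt_len_swap_mul hvab h1
    rwa [swap_mul_cancel] at this
  · -- Crit x (swap a b * y)
    have e1 : y⁻¹ b = iF := y.injective (by rw [y.apply_inv_self])
    have e2 : y⁻¹ a = q2F := y.injective (by rw [y.apply_inv_self])
    -- the strict inequality in the box
    have hstar : ∀ p j : ℕ, (iF : ℕ) < p → p ≤ (q2F : ℕ) → (a : ℕ) < j → j ≤ (b : ℕ) →
        Rk x p j + 1 ≤ Rk y p j := by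
      intro p j hip hpq2 haj hjb
      have hxia' : (x iF : ℕ) ≤ (a : ℕ) := hxia
      -- window sets
      have hsplit : ∀ (w : Perm (Fin n)) (j' : ℕ), Rk w p j' = Rk w ((iF : ℕ) + 1) j' +
          (Finset.univ.filter fun q : Fin n =>
            (iF : ℕ) + 1 ≤ (q : ℕ) ∧ (q : ℕ) < p ∧ j' ≤ (w q : ℕ)).card :=
        fun w j' => Rk_split w ((iF : ℕ) + 1) p j' (by omega)
      have ex := hsplit x j
      have ey := hsplit y j
      have exi := hsplit x (x iF : ℕ)
      have eyi := hsplit y (x iF : ℕ)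
      have sx : Rk x ((iF : ℕ) + 1) j = Rk x (iF : ℕ) j + if j ≤ (x iF : ℕ) then 1 else 0 :=
        Rk_succ x iF j
      have sy : Rk y ((iF : ℕ) + 1) j = Rk y (iF : ℕ) j + if j ≤ (y iF : ℕ) then 1 else 0 :=
        Rk_succ y iF j
      have sxi : Rk x ((iF : ℕ) + 1) (x iF : ℕ)
          = Rk x (iF : ℕ) (x iF : ℕ) + if (x iF : ℕ) ≤ (x iF : ℕ) then 1 else 0 :=
        Rk_succ x iF (x iF : ℕ)
      have syi : Rk y ((iF : ℕ) + 1) (x iF : ℕ)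
          = Rk y (iF : ℕ) (x iF : ℕ) + if (x iF : ℕ) ≤ (y iF : ℕ) then 1 else 0 :=
        Rk_succ y iF (x iF : ℕ)
      rw [if_neg (by omega)] at sx
      rw [if_pos (by omega : j ≤ (y iF : ℕ))] at sy
      rw [if_pos (le_refl _)] at sxi
      rw [if_pos (by omega)] at syi
      -- monotonicity for x window
      have hWxmono : (Finset.univ.filter fun q : Fin n =>
            (iF : ℕ) + 1 ≤ (q : ℕ) ∧ (q : ℕ) < p ∧ j ≤ (x q : ℕ)).card ≤
          (Finset.univ.filter fun q : Fin n =>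
            (iF : ℕ) + 1 ≤ (q : ℕ) ∧ (q : ℕ) < p ∧ (x iF : ℕ) ≤ (x q : ℕ)).card := by
        apply Finset.card_le_card
        intro q hq
        simp only [Finset.mem_filter, Finset.mem_univ, true_and] at hq ⊢
        exact ⟨hq.1, hq.2.1, by omega⟩
      -- equality for y window
      have hWyeq : (Finset.univ.filter fun q : Fin n =>
            (iF : ℕ) + 1 ≤ (q : ℕ) ∧ (q : ℕ) < p ∧ (x iF : ℕ) ≤ (y q : ℕ)).card =
          (Finset.univ.filter fun q : Fin n =>
            (iF : ℕ) + 1 ≤ (q : ℕ) ∧ (q : ℕ) < p ∧ j ≤ (y q : ℕ)).card := by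
        congr 1
        ext q
        simp only [Finset.mem_filter, Finset.mem_univ, true_and]
        refine and_congr_right fun h1 => and_congr_right fun h2 => ?_
        constructor
        · intro h3
          have hq2 := hmin2 q (by omega) (by omega)
          have hyqb : (y q : ℕ) ≠ (b : ℕ) := by
            intro hc
            have : y q = y iF := Fin.val_injective hc
            have : q = iF := y.injective this
            subst this
            omega
          have : (b : ℕ) ≤ (y q : ℕ) := by
            by_contra hc
            exact hq2 ⟨h3, by omega⟩
          omega
        · intro h3
          omega
      have hcxi := hcrit p (x iF : ℕ)
      have hpre1 := hRkpre j
      have hpre2 := hRkpre (x iF : ℕ)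
      omega
    intro p j
    have heq := Rk_swap y a b hab p j
    rw [e1, e2] at heq
    have hcj := hcrit p j
    by_cases hcore : (iF : ℕ) < p ∧ p ≤ (q2F : ℕ) ∧ (a : ℕ) < j ∧ j ≤ (b : ℕ)
    · have hs := hstar p j hcore.1 hcore.2.1 hcore.2.2.1 hcore.2.2.2
      split_ifs at heq <;> omega
    · split_ifs at heq <;> omega

/-- The rank criterion implies Bruhat order. -/
lemma bruhat_of_crit {x y : Perm (Fin n)} (h : Crit x y) : BruhatLE x y := by
  have main : ∀ (N : ℕ) (x y : Perm (Fin n)), len y < N → Crit x y → BruhatLE x y := by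
    intro N
    induction N with
    | zero => intro x y hlt; omega
    | succ N ih =>
      intro x y hlt hcrit
      by_cases hxy : x = y
      · subst hxy; exact Relation.ReflTransGen.refl
      · obtain ⟨y', hl, hc, a, b, hab, hy⟩ := descend hcrit hxy
        have hb : BruhatLE x y' := ih x y' (by omega) hc
        exact hb.tail ⟨⟨a, b, hab, hy⟩, hl⟩
  exact main (len y + 1) x y (by omega) h

lemma bruhat_iff_crit {x y : Perm (Fin n)} : BruhatLE x y ↔ Crit x y :=
  ⟨crit_of_bruhat, bruhat_of_crit⟩

end Stmt9Aux

namespace Stmt9Aux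
variable {n : ℕ}

lemma adj_ne {a b : Fin n} (hb : (b : ℕ) = (a : ℕ) + 1) : a ≠ b :=
  fun hc => by rw [hc] at hb; omega

lemma Rk_swap_adj_ne {w : Perm (Fin n)} {a b : Fin n} (hb : (b : ℕ) = (a : ℕ) + 1)
    {p j : ℕ} (hj : j ≠ (b : ℕ)) : Rk (swap a b * w) p j = Rk w p j := by
  have heq := Rk_swap w a b (adj_ne hb) p j
  split_ifs at heq <;> omega

lemma Rk_swap_adj_b {w : Perm (Fin n)} {a b : Fin n} (hb : (b : ℕ) = (a : ℕ) + 1) (p : ℕ) :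
    Rk (swap a b * w) p (b : ℕ) + (if ((w⁻¹ b : Fin n) : ℕ) < p then 1 else 0)
      = Rk w p (b : ℕ) + (if ((w⁻¹ a : Fin n) : ℕ) < p then 1 else 0) := by
  have heq := Rk_swap w a b (adj_ne hb) p (b : ℕ)
  split_ifs at heq ⊢ <;> omega

/-- Lifting, both descents: `Crit (s x) (s y)`. -/
lemma lift_dd {x y : Perm (Fin n)} {a b : Fin n} (hb : (b : ℕ) = (a : ℕ) + 1)
    (hcrit : Crit x y)
    (hdx : ((x⁻¹ b : Fin n) : ℕ) < ((x⁻¹ a : Fin n) : ℕ))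
    (hdy : ((y⁻¹ b : Fin n) : ℕ) < ((y⁻¹ a : Fin n) : ℕ)) :
    Crit (swap a b * x) (swap a b * y) := by
  intro p j
  by_cases hj : j = (b : ℕ)
  · subst hj
    have gx := Rk_swap_adj_b (w := x) hb p
    have gy := Rk_swap_adj_b (w := y) hb p
    have f1x := Rk_step x p b
    have f1y := Rk_step y p b
    have f2x := Rk_step x p a
    have f2y := Rk_step y p a
    rw [← hb] at f2x f2y
    have c0 := hcrit p (a : ℕ)
    have c1 := hcrit p (b : ℕ)
    have c2 := hcrit p ((b : ℕ) + 1)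
    split_ifs at gx gy f1x f1y f2x f2y <;> omega
  · rw [Rk_swap_adj_ne hb hj, Rk_swap_adj_ne hb hj]
    exact hcrit p j

/-- Lifting: ascent below, descent above: `Crit z (s y)`. -/
lemma lift_ud {z y : Perm (Fin n)} {a b : Fin n} (hb : (b : ℕ) = (a : ℕ) + 1)
    (hcrit : Crit z y)
    (haz : ((z⁻¹ a : Fin n) : ℕ) < ((z⁻¹ b : Fin n) : ℕ))
    (hdy : ((y⁻¹ b : Fin n) : ℕ) < ((y⁻¹ a : Fin n) : ℕ)) :
    Crit z (swap a b * y) := by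
  intro p j
  by_cases hj : j = (b : ℕ)
  · subst hj
    have gy := Rk_swap_adj_b (w := y) hb p
    have f1z := Rk_step z p b
    have f1y := Rk_step y p b
    have f2z := Rk_step z p a
    have f2y := Rk_step y p a
    rw [← hb] at f2z f2y
    have c0 := hcrit p (a : ℕ)
    have c1 := hcrit p (b : ℕ)
    have c2 := hcrit p ((b : ℕ) + 1)
    split_ifs at gy f1z f1y f2z f2y <;> omega
  · rw [Rk_swap_adj_ne hb hj]
    exact hcrit p j

/-- Lifting: ascent below, descent above: `Crit (s u) w`. -/
lemma lift_du {u w : Perm (Fin n)} {a b : Fin n} (hb : (b : ℕ) = (a : ℕ) + 1)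
    (hcrit : Crit u w)
    (hau : ((u⁻¹ a : Fin n) : ℕ) < ((u⁻¹ b : Fin n) : ℕ))
    (hdw : ((w⁻¹ b : Fin n) : ℕ) < ((w⁻¹ a : Fin n) : ℕ)) :
    Crit (swap a b * u) w := by
  intro p j
  by_cases hj : j = (b : ℕ)
  · subst hj
    have gu := Rk_swap_adj_b (w := u) hb p
    have f1u := Rk_step u p b
    have f1w := Rk_step w p b
    have f2u := Rk_step u p a
    have f2w := Rk_step w p a
    rw [← hb] at f2u f2w
    have c0 := hcrit p (a : ℕ)
    have c1 := hcrit p (b : ℕ)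
    have c2 := hcrit p ((b : ℕ) + 1)
    split_ifs at gu f1u f1w f2u f2w <;> omega
  · rw [Rk_swap_adj_ne hb hj]
    exact hcrit p j

/-- Lifting, both ascents: `Crit (s u) (s w)`. -/
lemma lift_uu {u w : Perm (Fin n)} {a b : Fin n} (hb : (b : ℕ) = (a : ℕ) + 1)
    (hcrit : Crit u w)
    (hau : ((u⁻¹ a : Fin n) : ℕ) < ((u⁻¹ b : Fin n) : ℕ))
    (haw : ((w⁻¹ a : Fin n) : ℕ) < ((w⁻¹ b : Fin n) : ℕ)) :
    Crit (swap a b * u) (swap a b * w) := by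
  intro p j
  by_cases hj : j = (b : ℕ)
  · subst hj
    have gu := Rk_swap_adj_b (w := u) hb p
    have gw := Rk_swap_adj_b (w := w) hb p
    have f1u := Rk_step u p b
    have f1w := Rk_step w p b
    have f2u := Rk_step u p a
    have f2w := Rk_step w p a
    rw [← hb] at f2u f2w
    have c0 := hcrit p (a : ℕ)
    have c1 := hcrit p (b : ℕ)
    have c2 := hcrit p ((b : ℕ) + 1)
    split_ifs at gu gw f1u f1w f2u f2w <;> omega
  · rw [Rk_swap_adj_ne hb hj, Rk_swap_adj_ne hb hj]
    exact hcrit p j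

end Stmt9Aux

open Stmt9Aux in
theorem stmt9 (n : ℕ) (i : ℕ) (h : i + 1 < n) (x y : Perm (Fin n))
    (hxy : BruhatLT x y)
    (hy : len (simpleT n i h * y) < len y)
    (hx : len (simpleT n i h * x) < len x)
    (hinc : ¬ BruhatLE x (simpleT n i h * y) ∧ ¬ BruhatLE (simpleT n i h * y) x) :
    (∀ z : Perm (Fin n), BruhatLE x z → BruhatLE z y →
        BruhatLE (simpleT n i h * x) (simpleT n i h * z) ∧
        BruhatLE (simpleT n i h * z) (simpleT n i h * y)) ∧
    (∀ z z' : Perm (Fin n), BruhatLE x z → BruhatLE z y →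
        BruhatLE x z' → BruhatLE z' y → BruhatLE z z' →
        BruhatLE (simpleT n i h * z) (simpleT n i h * z')) ∧
    (∀ z z' : Perm (Fin n), BruhatLE x z → BruhatLE z y →
        BruhatLE x z' → BruhatLE z' y →
        simpleT n i h * z = simpleT n i h * z' → z = z') ∧
    (∀ z' : Perm (Fin n),
        BruhatLE (simpleT n i h * x) z' → BruhatLE z' (simpleT n i h * y) →
        ∃ z, BruhatLE x z ∧ BruhatLE z y ∧ z' = simpleT n i h * z) := by
  set a : Fin n := ⟨i, Nat.lt_of_succ_lt h⟩ with hadef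
  set b : Fin n := ⟨i + 1, h⟩ with hbdef
  have hb : (b : ℕ) = (a : ℕ) + 1 := rfl
  have hs : simpleT n i h = swap a b := rfl
  rw [hs] at hy hx hinc ⊢
  -- descent facts
  have hdy : ((y⁻¹ b : Fin n) : ℕ) < ((y⁻¹ a : Fin n) : ℕ) := (descent_iff hb).mp hy
  have hdx : ((x⁻¹ b : Fin n) : ℕ) < ((x⁻¹ a : Fin n) : ℕ) := (descent_iff hb).mp hx
  -- every z in the interval is a descent
  have hzdes : ∀ z : Perm (Fin n), BruhatLE x z → BruhatLE z y →
      ((z⁻¹ b : Fin n) : ℕ) < ((z⁻¹ a : Fin n) : ℕ) := by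
    intro z hxz hzy
    rcases lt_or_gt_of_ne (inv_pos_ne (w := z) (adj_ne hb)) with hasc | hdes
    · exfalso
      apply hinc.1
      apply bruhat_of_crit
      exact crit_trans (crit_of_bruhat hxz) (lift_ud hb (crit_of_bruhat hzy) hasc hdy)
    · exact hdes
  refine ⟨?_, ?_, ?_, ?_⟩
  · intro z hxz hzy
    have hdz := hzdes z hxz hzy
    constructor
    · exact bruhat_of_crit (lift_dd hb (crit_of_bruhat hxz) hdx hdz)
    · exact bruhat_of_crit (lift_dd hb (crit_of_bruhat hzy) hdz hdy)
  · intro z z' hxz hzy hxz' hz'y hzz'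
    exact bruhat_of_crit
      (lift_dd hb (crit_of_bruhat hzz') (hzdes z hxz hzy) (hzdes z' hxz' hz'y))
  · intro z z' _ _ _ _ heq
    exact mul_left_cancel heq
  · intro z' hsxz' hz'sy
    -- s x is an ascent
    have hax : (((swap a b * x)⁻¹ a : Fin n) : ℕ) < (((swap a b * x)⁻¹ b : Fin n) : ℕ) := by
      rw [inv_swap_mul_apply_left, inv_swap_mul_apply_right]
      exact hdx
    -- z' must be an ascent
    have haz' : ((z'⁻¹ a : Fin n) : ℕ) < ((z'⁻¹ b : Fin n) : ℕ) := by
      rcases lt_or_gt_of_ne (inv_pos_ne (w := z') (adj_ne hb)) with hasc | hdes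
      · exact hasc
      · exfalso
        apply hinc.1
        apply bruhat_of_crit
        have h1 : Crit (swap a b * (swap a b * x)) z' :=
          lift_du hb (crit_of_bruhat hsxz') hax hdes
        rw [swap_mul_cancel] at h1
        exact crit_trans h1 (crit_of_bruhat hz'sy)
    -- s y viewed from below is an ascent
    have hasy : (((swap a b * y)⁻¹ a : Fin n) : ℕ) < (((swap a b * y)⁻¹ b : Fin n) : ℕ) := by
      rw [inv_swap_mul_apply_left, inv_swap_mul_apply_right]
      exact hdy
    refine ⟨swap a b * z', ?_, ?_, (swap_mul_cancel a b z').symm⟩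
    · apply bruhat_of_crit
      have h1 : Crit (swap a b * (swap a b * x)) (swap a b * z') :=
        lift_uu hb (crit_of_bruhat hsxz') hax haz'
      rwa [swap_mul_cancel] at h1
    · apply bruhat_of_crit
      have h1 : Crit (swap a b * z') (swap a b * (swap a b * y)) :=
        lift_uu hb (crit_of_bruhat hz'sy) haz' hasy
      rwa [swap_mul_cancel] at h1
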